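/- Let f : ℝⁿ → ℝ be a PLQ function with polyhedral pieces P¹, …, P^I and associated quadratic functions q₁, …, q_I, let X ⊆ ℝⁿ be a polyhedron, and set P̃ⁱ := X ∩ Pⁱ and A(x̄) := {i : x̄ ∈ Pⁱ}. For x̄ ∈ X the following are all equivalent: (a1) x̄ is a strong local minimizer of f on X; (a2) x̄ is a strict local minimizer of f on X; (a3) x̄ is an isolated local minimizer of f on X; (a4) x̄ is an isolated stationary point and a local minimizer of f on X; (b1)–(b4) the corresponding four statements hold for q_i on P̃ⁱ for every i ∈ A(x̄); (c) f'(x̄; x − x̄) ≥ 0 for all x ∈ X and f⁽²⁾(x̄; x − x̄) > 0 for all x ∈ X \ {x̄} with f'(x̄; x − x̄) = 0; (d1) x̄ is a directional stationary point of f on X and f⁽²⁾(x̄;v) > 0 for all nonzero v ∈ T(x̄;X) with f'(x̄;v) = 0 (the second-order sufficient condition); (d2) for every i ∈ A(x̄), x̄ is a stationary point of q_i on P̃ⁱ and ∇²q_i(x̄) is strictly copositive on the critical cone C(x̄;q_i;P̃ⁱ). -/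

import Mathlib

open Filter Topology Set

noncomputable section

/-- Euclidean norm on `Fin n → ℝ`. -/
def n2 {n : ℕ} (v : Fin n → ℝ) : ℝ := Real.sqrt (∑ i, v i ^ 2)

/-- A polyhedron `{x : Ax ≤ b}`. -/
def IsPolyhedron {n : ℕ} (S : Set (Fin n → ℝ)) : Prop :=
  ∃ (m : ℕ) (A : Matrix (Fin m) (Fin n) ℝ) (b : Fin m → ℝ),
    S = {x | ∀ i, (∑ j, A i j * x j) ≤ b i}

/-- The tangent cone of `S` at `x`. -/
def TangentCone {n : ℕ} (S : Set (Fin n → ℝ)) (x : Fin n → ℝ) : Set (Fin n → ℝ) :=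
  {v | ∃ (xs : ℕ → Fin n → ℝ) (τ : ℕ → ℝ),
    (∀ k, xs k ∈ S) ∧ Tendsto xs atTop (𝓝 x) ∧
    (∀ k, 0 < τ k) ∧ Tendsto τ atTop (𝓝 (0:ℝ)) ∧
    Tendsto (fun k => (τ k)⁻¹ • (xs k - x)) atTop (𝓝 v)}

/-- One-sided directional derivative: `f'(x;v) = d`. -/
def HasDirDeriv {n : ℕ} (f : (Fin n → ℝ) → ℝ) (x v : Fin n → ℝ) (d : ℝ) : Prop :=
  Tendsto (fun τ : ℝ => (f (x + τ • v) - f x) / τ) (𝓝[>] 0) (𝓝 d)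

/-- Second-order directional derivative: `f'(x;v) = d₁` and `f⁽²⁾(x;v) = d₂`. -/
def HasDirDeriv2 {n : ℕ} (f : (Fin n → ℝ) → ℝ) (x v : Fin n → ℝ) (d₁ d₂ : ℝ) : Prop :=
  HasDirDeriv f x v d₁ ∧
  Tendsto (fun τ : ℝ => 2 * (f (x + τ • v) - f x - τ * d₁) / τ ^ 2) (𝓝[>] 0) (𝓝 d₂)

/-- Local minimizer of `f` on `X`. -/
def IsLocMin' {n : ℕ} (f : (Fin n → ℝ) → ℝ) (X : Set (Fin n → ℝ)) (xbar : Fin n → ℝ) : Prop :=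
  xbar ∈ X ∧ ∃ ε > (0:ℝ), ∀ y ∈ X, n2 (y - xbar) < ε → f xbar ≤ f y

/-- Strict local minimizer of `f` on `X`. -/
def IsStrictLocMin {n : ℕ} (f : (Fin n → ℝ) → ℝ) (X : Set (Fin n → ℝ)) (xbar : Fin n → ℝ) : Prop :=
  xbar ∈ X ∧ ∃ ε > (0:ℝ), ∀ y ∈ X, n2 (y - xbar) < ε → y ≠ xbar → f xbar < f y

/-- Strong local minimizer of `f` on `X`. -/
def IsStrongLocMin {n : ℕ} (f : (Fin n → ℝ) → ℝ) (X : Set (Fin n → ℝ)) (xbar : Fin n → ℝ) : Prop :=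
  xbar ∈ X ∧ ∃ c > (0:ℝ), ∃ ε > (0:ℝ), ∀ y ∈ X, n2 (y - xbar) < ε →
    f xbar + c * n2 (y - xbar) ^ 2 ≤ f y

/-- Isolated local minimizer of `f` on `X`. -/
def IsIsolatedLocMin {n : ℕ} (f : (Fin n → ℝ) → ℝ) (X : Set (Fin n → ℝ)) (xbar : Fin n → ℝ) : Prop :=
  IsLocMin' f X xbar ∧ ∃ ε > (0:ℝ), ∀ y, IsLocMin' f X y → n2 (y - xbar) < ε → y = xbar

/-- Directional stationary point of `f` on `X` (via one-sided directional derivatives). -/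
def IsStatF {n : ℕ} (f : (Fin n → ℝ) → ℝ) (X : Set (Fin n → ℝ)) (y : Fin n → ℝ) : Prop :=
  y ∈ X ∧ ∀ x ∈ X, ∃ d, HasDirDeriv f y (x - y) d ∧ 0 ≤ d

/-- Isolated stationary point of `f` on `X`. -/
def IsIsolatedStatF {n : ℕ} (f : (Fin n → ℝ) → ℝ) (X : Set (Fin n → ℝ)) (xbar : Fin n → ℝ) : Prop :=
  IsStatF f X xbar ∧ ∃ ε > (0:ℝ), ∀ y, IsStatF f X y → n2 (y - xbar) < ε → y = xbar

/-- The quadratic function `q(x) = ½ xᵀQx + cᵀx + α`. -/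
def quadF {n : ℕ} (Q : Matrix (Fin n) (Fin n) ℝ) (c : Fin n → ℝ) (α : ℝ)
    (x : Fin n → ℝ) : ℝ :=
  (1/2) * (∑ i, ∑ j, Q i j * x i * x j) + (∑ i, c i * x i) + α

/-- The gradient `∇q(x) = Qx + c` (for symmetric `Q`). -/
def gradQ {n : ℕ} (Q : Matrix (Fin n) (Fin n) ℝ) (c : Fin n → ℝ) (x : Fin n → ℝ) :
    Fin n → ℝ :=
  fun i => (∑ j, Q i j * x j) + c i

/-- Stationary point of the QP `min_{x∈S} q(x)`. -/
def IsStatQ {n : ℕ} (Q : Matrix (Fin n) (Fin n) ℝ) (c : Fin n → ℝ)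
    (S : Set (Fin n → ℝ)) (y : Fin n → ℝ) : Prop :=
  y ∈ S ∧ ∀ x ∈ S, 0 ≤ ∑ i, gradQ Q c y i * (x i - y i)

/-- Isolated stationary point of the QP `min_{x∈S} q(x)`. -/
def IsIsolatedStatQ {n : ℕ} (Q : Matrix (Fin n) (Fin n) ℝ) (c : Fin n → ℝ)
    (S : Set (Fin n → ℝ)) (xbar : Fin n → ℝ) : Prop :=
  IsStatQ Q c S xbar ∧ ∃ ε > (0:ℝ), ∀ y, IsStatQ Q c S y → n2 (y - xbar) < ε → y = xbar

lemma n2_nonneg {n : ℕ} (v : Fin n → ℝ) : 0 ≤ n2 v := Real.sqrt_nonneg _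

lemma n2_eq_zero {n : ℕ} {v : Fin n → ℝ} : n2 v = 0 ↔ v = 0 := by
  unfold n2
  rw [Real.sqrt_eq_zero (by positivity)]
  constructor
  · intro h
    funext i
    have := (Finset.sum_eq_zero_iff_of_nonneg (fun i _ => by positivity)).1 h i (Finset.mem_univ i)
    have : v i = 0 := by nlinarith [this]
    simpa using this
  · rintro rfl; simp

lemma n2_pos {n : ℕ} {v : Fin n → ℝ} (h : v ≠ 0) : 0 < n2 v := by
  rcases lt_or_eq_of_le (n2_nonneg v) with h' | h'
  · exact h'
  · exact absurd (n2_eq_zero.1 h'.symm) h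

lemma n2_smul {n : ℕ} (t : ℝ) (v : Fin n → ℝ) : n2 (t • v) = |t| * n2 v := by
  unfold n2
  rw [← Real.sqrt_sq_eq_abs, ← Real.sqrt_mul (by positivity), Finset.mul_sum]
  congr 1
  apply Finset.sum_congr rfl
  intro i _
  simp [Pi.smul_apply, smul_eq_mul]; ring

lemma abs_le_n2 {n : ℕ} (v : Fin n → ℝ) (i : Fin n) : |v i| ≤ n2 v := by
  unfold n2
  rw [← Real.sqrt_sq_eq_abs]
  apply Real.sqrt_le_sqrt
  exact Finset.single_le_sum (f := fun i => v i ^ 2) (fun j _ => by positivity) (Finset.mem_univ i)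

lemma continuous_n2 {n : ℕ} : Continuous (n2 (n := n)) := by
  apply Real.continuous_sqrt.comp
  exact continuous_finset_sum _ (fun i _ => (continuous_apply i).pow 2)

lemma tendsto_n2_iff {n : ℕ} {u : ℕ → Fin n → ℝ} {x : Fin n → ℝ} :
    Tendsto u atTop (𝓝 x) ↔ Tendsto (fun k => n2 (u k - x)) atTop (𝓝 0) := by
  constructor
  · intro h
    have : Tendsto (fun k => u k - x) atTop (𝓝 (x - x)) := h.sub tendsto_const_nhds
    rw [sub_self] at this
    have := (continuous_n2.tendsto 0).comp this
    simpa [n2_eq_zero.2 rfl, Function.comp_def] using this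
  · intro h
    rw [tendsto_pi_nhds]
    intro i
    apply tendsto_of_tendsto_of_tendsto_of_le_of_le (g := fun k => x i - n2 (u k - x))
      (h := fun k => x i + n2 (u k - x))
    · simpa using tendsto_const_nhds.sub h
    · simpa using tendsto_const_nhds.add h
    · intro k
      have h2 := abs_le (a := (u k - x) i) (b := n2 (u k - x)) |>.1 (abs_le_n2 (u k - x) i)
      simp only [Pi.sub_apply] at h2
      show x i - n2 (u k - x) ≤ u k i
      linarith [h2.1]
    · intro k
      have h2 := abs_le (a := (u k - x) i) (b := n2 (u k - x)) |>.1 (abs_le_n2 (u k - x) i)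
      simp only [Pi.sub_apply] at h2
      show u k i ≤ x i + n2 (u k - x)
      linarith [h2.2]

def FeasDir {n : ℕ} (S : Set (Fin n → ℝ)) (x : Fin n → ℝ) : Set (Fin n → ℝ) :=
  {v | ∃ δ > (0:ℝ), ∀ τ ∈ Set.Ioc (0:ℝ) δ, x + τ • v ∈ S}

lemma rowL {n m : ℕ} (A : Matrix (Fin m) (Fin n) ℝ) (i : Fin m) (x v : Fin n → ℝ) (τ : ℝ) :
    (∑ j, A i j * (x + τ • v) j) = (∑ j, A i j * x j) + τ * ∑ j, A i j * v j := by
  rw [Finset.mul_sum, ← Finset.sum_add_distrib]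
  apply Finset.sum_congr rfl
  intro j _
  simp [Pi.add_apply, Pi.smul_apply, smul_eq_mul]; ring

lemma rowsub {n m : ℕ} (A : Matrix (Fin m) (Fin n) ℝ) (i : Fin m) (x v : Fin n → ℝ) (τ : ℝ) :
    (∑ j, A i j * (τ • (v - x)) j) = τ * ((∑ j, A i j * v j) - ∑ j, A i j * x j) := by
  rw [mul_sub, Finset.mul_sum, Finset.mul_sum, ← Finset.sum_sub_distrib]
  apply Finset.sum_congr rfl
  intro j _
  simp [Pi.sub_apply, Pi.smul_apply, smul_eq_mul]; ring

lemma row_sub {n m : ℕ} (A : Matrix (Fin m) (Fin n) ℝ) (i : Fin m) (x v : Fin n → ℝ) :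
    (∑ j, A i j * (v - x) j) = (∑ j, A i j * v j) - ∑ j, A i j * x j := by
  rw [← Finset.sum_sub_distrib]
  apply Finset.sum_congr rfl
  intro j _
  simp [Pi.sub_apply]; ring

lemma row_continuous {n m : ℕ} (A : Matrix (Fin m) (Fin n) ℝ) (i : Fin m) :
    Continuous (fun v : Fin n → ℝ => ∑ j, A i j * v j) :=
  continuous_finset_sum _ (fun j _ => continuous_const.mul (continuous_apply j))

lemma poly_closed {n : ℕ} {S : Set (Fin n → ℝ)} (hS : IsPolyhedron S) : IsClosed S := by
  obtain ⟨m, A, b, rfl⟩ := hS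
  have : {x : Fin n → ℝ | ∀ i, (∑ j, A i j * x j) ≤ b i} =
      ⋂ i, {x | (∑ j, A i j * x j) ≤ b i} := by ext x; simp
  rw [this]
  exact isClosed_iInter (fun i => isClosed_le (row_continuous A i) continuous_const)

lemma poly_convex {n : ℕ} {S : Set (Fin n → ℝ)} (hS : IsPolyhedron S) {x y : Fin n → ℝ}
    (hx : x ∈ S) (hy : y ∈ S) {t : ℝ} (ht0 : 0 ≤ t) (ht1 : t ≤ 1) : x + t • (y - x) ∈ S := by
  obtain ⟨m, A, b, rfl⟩ := hS
  intro i
  have h1 := hx i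
  have h2 := hy i
  show (∑ j, A i j * (x + t • (y - x)) j) ≤ b i
  rw [rowL, row_sub]
  nlinarith

lemma feasDir_smul {n : ℕ} {S : Set (Fin n → ℝ)} {x v : Fin n → ℝ} {s : ℝ} (hs : 0 < s)
    (hv : v ∈ FeasDir S x) : s • v ∈ FeasDir S x := by
  obtain ⟨δ, hδ, h⟩ := hv
  refine ⟨δ / s, by positivity, fun τ hτ => ?_⟩
  have : x + τ • s • v = x + (τ * s) • v := by rw [smul_smul]
  rw [this]
  refine h (τ * s) ⟨by nlinarith [hτ.1], ?_⟩
  have h2 := hτ.2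
  rw [le_div_iff₀ hs] at h2
  linarith

lemma feasDir_subset_tangent {n : ℕ} {S : Set (Fin n → ℝ)} {x : Fin n → ℝ} :
    FeasDir S x ⊆ TangentCone S x := by
  rintro v ⟨δ, hδ, h⟩
  set τ : ℕ → ℝ := fun k => δ / (k + 1) with hτdef
  have hτpos : ∀ k, 0 < τ k := fun k => by positivity
  have hτle : ∀ k, τ k ≤ δ := by
    intro k
    rw [hτdef]
    rw [div_le_iff₀ (by positivity)]
    nlinarith [Nat.cast_nonneg (α := ℝ) k, hδ]
  have hτ0 : Tendsto τ atTop (𝓝 (0:ℝ)) := by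
    have := tendsto_one_div_add_atTop_nhds_zero_nat (𝕜 := ℝ)
    have h2 : Tendsto (fun k : ℕ => δ * (1 / (k + 1))) atTop (𝓝 (δ * 0)) :=
      tendsto_const_nhds.mul this
    simpa [hτdef, div_eq_mul_inv, mul_comm, one_div] using h2
  refine ⟨fun k => x + τ k • v, τ, fun k => h _ ⟨hτpos k, hτle k⟩, ?_, hτpos, hτ0, ?_⟩
  · have : Tendsto (fun k => x + τ k • v) atTop (𝓝 (x + (0:ℝ) • v)) :=
      tendsto_const_nhds.add (hτ0.smul_const v)
    simpa using this
  · have : ∀ k, (τ k)⁻¹ • (x + τ k • v - x) = v := by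
      intro k
      rw [add_sub_cancel_left, smul_smul, inv_mul_cancel₀ (hτpos k).ne', one_smul]
    simp only [this]
    exact tendsto_const_nhds

lemma tangent_mono {n : ℕ} {S T : Set (Fin n → ℝ)} (h : S ⊆ T) (x : Fin n → ℝ) :
    TangentCone S x ⊆ TangentCone T x := by
  rintro v ⟨xs, τ, h1, h2, h3, h4, h5⟩
  exact ⟨xs, τ, fun k => h (h1 k), h2, h3, h4, h5⟩

lemma poly_tangent_facts {n : ℕ} {S : Set (Fin n → ℝ)} (hS : IsPolyhedron S) {x : Fin n → ℝ}
    (hx : x ∈ S) : TangentCone S x = FeasDir S x ∧ IsClosed (TangentCone S x) := by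
  obtain ⟨m, A, b, rfl⟩ := hS
  set S : Set (Fin n → ℝ) := {x | ∀ i, (∑ j, A i j * x j) ≤ b i} with hSdef
  set D : Set (Fin n → ℝ) :=
    {v | ∀ i, ((∑ j, A i j * x j) = b i) → (∑ j, A i j * v j) ≤ 0} with hDdef
  have hTD : TangentCone S x ⊆ D := by
    rintro v ⟨xs, τ, h1, h2, h3, h4, h5⟩ i hi
    have hcomp : Tendsto (fun k => ∑ j, A i j * ((τ k)⁻¹ • (xs k - x)) j) atTop
        (𝓝 (∑ j, A i j * v j)) := ((row_continuous A i).tendsto v).comp h5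
    refine le_of_tendsto hcomp (Filter.Eventually.of_forall (fun k => ?_))
    rw [rowsub]
    have hle : (∑ j, A i j * (xs k) j) ≤ b i := h1 k i
    have : (∑ j, A i j * (xs k) j) - (∑ j, A i j * x j) ≤ 0 := by rw [hi]; linarith
    have hτ := (h3 k)
    have : (τ k)⁻¹ * ((∑ j, A i j * (xs k) j) - (∑ j, A i j * x j)) ≤ 0 :=
      mul_nonpos_of_nonneg_of_nonpos (by positivity) this
    exact this
  have hDF : D ⊆ FeasDir S x := by
    intro v hv
    have hev : ∀ i : Fin m, ∀ᶠ τ in 𝓝[>] (0:ℝ),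
        (∑ j, A i j * x j) + τ * (∑ j, A i j * v j) ≤ b i := by
      intro i
      rcases eq_or_lt_of_le (hx i) with heq | hlt
      · have hv0 := hv i heq
        filter_upwards [self_mem_nhdsWithin] with τ hτ
        have : τ * (∑ j, A i j * v j) ≤ 0 :=
          mul_nonpos_of_nonneg_of_nonpos (le_of_lt hτ) hv0
        rw [heq]; linarith
      · have hcont : Tendsto (fun τ : ℝ => (∑ j, A i j * x j) + τ * (∑ j, A i j * v j))
            (𝓝[>] (0:ℝ)) (𝓝 ((∑ j, A i j * x j) + 0 * (∑ j, A i j * v j))) := by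
          apply Tendsto.mono_left _ nhdsWithin_le_nhds
          exact (tendsto_const_nhds.add ((continuous_id.mul continuous_const).tendsto 0))
        have : ((∑ j, A i j * x j) + 0 * (∑ j, A i j * v j)) < b i := by simpa using hlt
        filter_upwards [hcont.eventually_lt_const this] with τ hτ using le_of_lt hτ
    have hall : ∀ᶠ τ in 𝓝[>] (0:ℝ), ∀ i,
        (∑ j, A i j * x j) + τ * (∑ j, A i j * v j) ≤ b i := eventually_all.2 hev
    rw [Filter.eventually_iff, mem_nhdsGT_iff_exists_Ioc_subset] at hall
    obtain ⟨δ, hδ, hsub⟩ := hall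
    refine ⟨δ, by simpa using hδ, fun τ hτ => ?_⟩
    intro i
    rw [rowL]
    exact hsub hτ i
  have hDclosed : IsClosed D := by
    have : D = ⋂ i, {v | ((∑ j, A i j * x j) = b i) → (∑ j, A i j * v j) ≤ 0} := by
      ext v; simp [hDdef]
    rw [this]
    refine isClosed_iInter (fun i => ?_)
    by_cases h : (∑ j, A i j * x j) = b i
    · have : {v : Fin n → ℝ | ((∑ j, A i j * x j) = b i) → (∑ j, A i j * v j) ≤ 0}
          = {v | (∑ j, A i j * v j) ≤ 0} := by ext v; simp [h]
      rw [this]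
      exact isClosed_le (row_continuous A i) continuous_const
    · have : {v : Fin n → ℝ | ((∑ j, A i j * x j) = b i) → (∑ j, A i j * v j) ≤ 0}
          = Set.univ := by ext v; simp [h]
      rw [this]; exact isClosed_univ
  have hEq : TangentCone S x = D :=
    Set.Subset.antisymm hTD (fun v hv => feasDir_subset_tangent (hDF hv))
  constructor
  · exact Set.Subset.antisymm (hEq ▸ hDF) feasDir_subset_tangent
  · rw [hEq]; exact hDclosed

lemma quad_expand {n : ℕ} (Q : Matrix (Fin n) (Fin n) ℝ) (hQ : ∀ k l, Q k l = Q l k)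
    (c : Fin n → ℝ) (α : ℝ) (x v : Fin n → ℝ) (τ : ℝ) :
    quadF Q c α (x + τ • v) = quadF Q c α x + τ * (∑ i, gradQ Q c x i * v i)
      + τ ^ 2 * ((1/2) * ∑ k, ∑ l, Q k l * v k * v l) := by
  unfold quadF gradQ
  have split : ∀ (a b c2 : Fin n → Fin n → ℝ),
      (∑ i, ∑ j, (a i j + b i j * τ + c2 i j * τ ^ 2))
        = (∑ i, ∑ j, a i j) + (∑ i, ∑ j, b i j) * τ + (∑ i, ∑ j, c2 i j) * τ ^ 2 := by
    intro a b c2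
    rw [Finset.sum_mul, Finset.sum_mul, ← Finset.sum_add_distrib, ← Finset.sum_add_distrib]
    apply Finset.sum_congr rfl; intro i _
    rw [Finset.sum_mul, Finset.sum_mul, ← Finset.sum_add_distrib, ← Finset.sum_add_distrib]
  have e1 : (∑ i, ∑ j, Q i j * (x + τ • v) i * (x + τ • v) j)
      = (∑ i, ∑ j, Q i j * x i * x j) + (∑ i, ∑ j, (Q i j * v i * x j
        + Q i j * x i * v j)) * τ + (∑ i, ∑ j, Q i j * v i * v j) * τ ^ 2 := by
    rw [← split (fun i j => Q i j * x i * x j)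
      (fun i j => Q i j * v i * x j + Q i j * x i * v j) (fun i j => Q i j * v i * v j)]
    apply Finset.sum_congr rfl; intro i _
    apply Finset.sum_congr rfl; intro j _
    simp only [Pi.add_apply, Pi.smul_apply, smul_eq_mul]
    ring
  have e1b : (∑ i, ∑ j, (Q i j * v i * x j + Q i j * x i * v j))
      = (∑ i, ∑ j, Q i j * v i * x j) + (∑ i, ∑ j, Q i j * x i * v j) := by
    rw [← Finset.sum_add_distrib]
    apply Finset.sum_congr rfl; intro i _
    rw [← Finset.sum_add_distrib]
  have e2 : (∑ i, ∑ j, Q i j * x i * v j) = (∑ i, ∑ j, Q i j * v i * x j) := by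
    rw [Finset.sum_comm]
    apply Finset.sum_congr rfl; intro i _
    apply Finset.sum_congr rfl; intro j _
    rw [hQ j i]; ring
  have e3 : (∑ i, c i * (x + τ • v) i) = (∑ i, c i * x i) + (∑ i, c i * v i) * τ := by
    rw [Finset.sum_mul, ← Finset.sum_add_distrib]
    apply Finset.sum_congr rfl; intro i _
    simp only [Pi.add_apply, Pi.smul_apply, smul_eq_mul]
    ring
  have e4 : (∑ i, ((∑ j, Q i j * x j) + c i) * v i)
      = (∑ i, ∑ j, Q i j * v i * x j) + (∑ i, c i * v i) := by
    rw [← Finset.sum_add_distrib]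
    apply Finset.sum_congr rfl; intro i _
    rw [add_mul, Finset.sum_mul]
    congr 1
    apply Finset.sum_congr rfl; intro j _
    rw [hQ i j]; ring
  rw [e1, e1b, e2, e3, e4]
  ring

lemma hasDirDeriv2_of_segment {n : ℕ} (f : (Fin n → ℝ) → ℝ)
    (Q : Matrix (Fin n) (Fin n) ℝ) (hQ : ∀ k l, Q k l = Q l k) (c : Fin n → ℝ) (α : ℝ)
    (x v : Fin n → ℝ) {δ : ℝ} (hδ : 0 < δ)
    (hcong : ∀ τ ∈ Set.Icc (0:ℝ) δ, f (x + τ • v) = quadF Q c α (x + τ • v)) :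
    HasDirDeriv2 f x v (∑ i, gradQ Q c x i * v i) (∑ k, ∑ l, Q k l * v k * v l) := by
  have hx0 : f x = quadF Q c α x := by
    have := hcong 0 ⟨le_refl _, le_of_lt hδ⟩
    simpa using this
  have hIoc : Set.Ioc (0:ℝ) δ ∈ 𝓝[>] (0:ℝ) :=
    Ioc_mem_nhdsGT_of_mem ⟨le_refl 0, hδ⟩
  set G := (∑ i, gradQ Q c x i * v i) with hG
  set H := ((1/2) * ∑ k, ∑ l, Q k l * v k * v l) with hH
  have hval : ∀ τ ∈ Set.Ioc (0:ℝ) δ, f (x + τ • v) = f x + τ * G + τ ^ 2 * H := by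
    intro τ hτ
    rw [hcong τ ⟨le_of_lt hτ.1, hτ.2⟩, quad_expand Q hQ c α x v τ, hx0]
  constructor
  · have key : Tendsto (fun τ : ℝ => G + τ * H) (𝓝[>] (0:ℝ)) (𝓝 G) := by
      have : Tendsto (fun τ : ℝ => G + τ * H) (𝓝 (0:ℝ)) (𝓝 (G + 0 * H)) :=
        tendsto_const_nhds.add ((continuous_id.mul continuous_const).tendsto 0)
      simpa using this.mono_left nhdsWithin_le_nhds
    refine key.congr' ?_
    filter_upwards [hIoc] with τ hτ
    rw [hval τ hτ]
    rw [eq_div_iff (ne_of_gt hτ.1)]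
    ring
  · have key : Tendsto (fun _ : ℝ => 2 * H) (𝓝[>] (0:ℝ)) (𝓝 (2 * H)) := tendsto_const_nhds
    have h2H : 2 * H = (∑ k, ∑ l, Q k l * v k * v l) := by rw [hH]; ring
    rw [← h2H]
    refine key.congr' ?_
    filter_upwards [hIoc] with τ hτ
    rw [hval τ hτ]
    have hτ0 : τ ≠ 0 := ne_of_gt hτ.1
    rw [eq_div_iff (pow_ne_zero 2 hτ0)]
    ring

lemma n2_eq_norm {n : ℕ} (v : Fin n → ℝ) :
    n2 v = ‖(WithLp.equiv 2 (Fin n → ℝ)).symm v‖ := by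
  rw [EuclideanSpace.norm_eq]
  unfold n2
  congr 1
  apply Finset.sum_congr rfl
  intro i _
  rw [WithLp.equiv_symm_apply, WithLp.ofLp_toLp, Real.norm_eq_abs, sq_abs]

lemma n2_triangle {n : ℕ} (a b : Fin n → ℝ) : n2 (a + b) ≤ n2 a + n2 b := by
  rw [n2_eq_norm, n2_eq_norm, n2_eq_norm]
  exact norm_add_le ((WithLp.equiv 2 (Fin n → ℝ)).symm a) ((WithLp.equiv 2 (Fin n → ℝ)).symm b)

lemma lin_continuous {n : ℕ} (g : Fin n → ℝ) : Continuous (fun v : Fin n → ℝ => ∑ i, g i * v i) :=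
  continuous_finset_sum _ (fun i _ => continuous_const.mul (continuous_apply i))

lemma lin_smul {n : ℕ} (g : Fin n → ℝ) (t : ℝ) (v : Fin n → ℝ) :
    (∑ i, g i * (t • v) i) = t * ∑ i, g i * v i := by
  rw [Finset.mul_sum]
  apply Finset.sum_congr rfl
  intro i _
  simp [smul_eq_mul]; ring

lemma HQ_continuous {n : ℕ} (Q : Matrix (Fin n) (Fin n) ℝ) :
    Continuous (fun v : Fin n → ℝ => ∑ k, ∑ l, Q k l * v k * v l) :=
  continuous_finset_sum _ (fun k _ => continuous_finset_sum _
    (fun l _ => (continuous_const.mul (continuous_apply k)).mul (continuous_apply l)))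

lemma HQ_smul {n : ℕ} (Q : Matrix (Fin n) (Fin n) ℝ) (t : ℝ) (v : Fin n → ℝ) :
    (∑ k, ∑ l, Q k l * (t • v) k * (t • v) l) = t ^ 2 * ∑ k, ∑ l, Q k l * v k * v l := by
  rw [Finset.mul_sum]
  apply Finset.sum_congr rfl
  intro k _
  rw [Finset.mul_sum]
  apply Finset.sum_congr rfl
  intro l _
  simp only [Pi.smul_apply, smul_eq_mul]; ring

lemma grad_shift {n : ℕ} (Q : Matrix (Fin n) (Fin n) ℝ) (c : Fin n → ℝ) (x d w : Fin n → ℝ) :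
    (∑ i, gradQ Q c (x + d) i * w i)
      = (∑ i, gradQ Q c x i * w i) + ∑ i, ∑ j, Q i j * d j * w i := by
  rw [← Finset.sum_add_distrib]
  apply Finset.sum_congr rfl
  intro i _
  unfold gradQ
  have e : (∑ j, Q i j * (x + d) j) = (∑ j, Q i j * x j) + ∑ j, Q i j * d j := by
    rw [← Finset.sum_add_distrib]
    apply Finset.sum_congr rfl
    intro j _
    simp [mul_add]
  have e2 : (∑ j, Q i j * d j * w i) = (∑ j, Q i j * d j) * w i := by
    rw [Finset.sum_mul]
  rw [e, e2]
  ring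

lemma HQ_swap {n : ℕ} (Q : Matrix (Fin n) (Fin n) ℝ) (hQ : ∀ k l, Q k l = Q l k)
    (d : Fin n → ℝ) : (∑ i, ∑ j, Q i j * d j * d i) = ∑ k, ∑ l, Q k l * d k * d l := by
  rw [Finset.sum_comm]
  apply Finset.sum_congr rfl; intro j _
  apply Finset.sum_congr rfl; intro i _
  rw [hQ i j]

lemma locmin_stat {n : ℕ} {S : Set (Fin n → ℝ)} (hS : IsPolyhedron S)
    (Q : Matrix (Fin n) (Fin n) ℝ) (hQ : ∀ k l, Q k l = Q l k) (c : Fin n → ℝ) (α : ℝ)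
    {y : Fin n → ℝ} (h : IsLocMin' (quadF Q c α) S y) : IsStatQ Q c S y := by
  obtain ⟨hyS, ε, hε, hmin⟩ := h
  refine ⟨hyS, fun x hx => ?_⟩
  set v := x - y with hv
  have hvi : ∀ i, v i = x i - y i := fun i => rfl
  set G := (∑ i, gradQ Q c y i * v i) with hGdef
  have hGeq : (∑ i, gradQ Q c y i * (x i - y i)) = G := by
    apply Finset.sum_congr rfl; intro i _; rw [hvi]
  rw [hGeq]
  by_contra hneg
  push_neg at hneg
  set H := ((1/2) * ∑ k, ∑ l, Q k l * v k * v l) with hHdef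
  set t := min 1 (min (ε / (2 * (n2 v + 1))) (-G / (2 * (|H| + 1)))) with htdef
  have hn2v : 0 ≤ n2 v := n2_nonneg v
  have ht0 : 0 < t := by
    apply lt_min (by norm_num)
    apply lt_min
    · positivity
    · have : 0 < -G := by linarith
      positivity
  have ht1 : t ≤ 1 := min_le_left _ _
  have htε : t ≤ ε / (2 * (n2 v + 1)) := le_trans (min_le_right _ _) (min_le_left _ _)
  have htG : t ≤ -G / (2 * (|H| + 1)) := le_trans (min_le_right _ _) (min_le_right _ _)
  have hmem : y + t • v ∈ S := poly_convex hS hyS hx (le_of_lt ht0) ht1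
  have hsmall : n2 (y + t • v - y) < ε := by
    rw [add_sub_cancel_left, n2_smul, abs_of_pos ht0]
    rw [le_div_iff₀ (by positivity)] at htε
    nlinarith
  have hval := hmin (y + t • v) hmem hsmall
  rw [quad_expand Q hQ c α y v t] at hval
  rw [← hGdef, ← hHdef] at hval
  have hineq : 0 ≤ G + t * H := by nlinarith
  have habs : t * H ≤ t * (|H| + 1) := by
    have := le_abs_self H
    nlinarith
  rw [le_div_iff₀ (by positivity : (0:ℝ) < 2 * (|H| + 1))] at htG
  nlinarith

lemma one_div_phi_tendsto {φ : ℕ → ℕ} (hφ : StrictMono φ) :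
    Tendsto (fun k : ℕ => 1 / ((φ k : ℝ) + 1)) atTop (𝓝 0) := by
  apply tendsto_of_tendsto_of_tendsto_of_le_of_le (g := fun _ : ℕ => (0:ℝ))
    (h := fun k : ℕ => 1 / ((k : ℝ) + 1)) tendsto_const_nhds
    tendsto_one_div_add_atTop_nhds_zero_nat
  · intro k; positivity
  · intro k
    apply div_le_div_of_nonneg_left (by norm_num) (by positivity)
    have h := (Nat.cast_le (α := ℝ)).2 (hφ.le_apply (x := k))
    push_cast
    linarith

lemma seq_compact_unit {n : ℕ} {u : ℕ → Fin n → ℝ} (h1 : ∀ k, n2 (u k) = 1) :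
    ∃ (ui : Fin n → ℝ) (φ : ℕ → ℕ), StrictMono φ ∧
      Tendsto (fun k => u (φ k)) atTop (𝓝 ui) ∧ n2 ui = 1 := by
  have hmem : ∀ k, u k ∈ Set.Icc (fun _ : Fin n => (-1:ℝ)) (fun _ => 1) := by
    intro k
    rw [Set.mem_Icc]
    have habs : ∀ i, |u k i| ≤ 1 := by
      intro i
      have h2 := abs_le_n2 (u k) i
      rw [h1 k] at h2
      exact h2
    constructor
    · rw [Pi.le_def]; intro i; exact (abs_le.1 (habs i)).1
    · rw [Pi.le_def]; intro i; exact (abs_le.1 (habs i)).2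
  obtain ⟨ui, _, φ, hφ, hconv⟩ := (isCompact_Icc).tendsto_subseq hmem
  refine ⟨ui, φ, hφ, hconv, ?_⟩
  have h2 : Tendsto (fun k => n2 (u (φ k))) atTop (𝓝 (n2 ui)) :=
    ((continuous_n2.tendsto ui).comp hconv)
  have h3 : Tendsto (fun k => n2 (u (φ k))) atTop (𝓝 1) := by
    simp only [h1]; exact tendsto_const_nhds
  exact tendsto_nhds_unique h2 h3

lemma ne_zero_of_n2_one {n : ℕ} {v : Fin n → ℝ} (h : n2 v = 1) : v ≠ 0 := by
  intro h0
  rw [h0, n2_eq_zero.2 rfl] at h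
  norm_num at h

lemma stat_cop_strong {n : ℕ} {S : Set (Fin n → ℝ)} (hS : IsPolyhedron S)
    (Q : Matrix (Fin n) (Fin n) ℝ) (hQ : ∀ k l, Q k l = Q l k) (c : Fin n → ℝ) (α : ℝ)
    {xbar : Fin n → ℝ} (hx : xbar ∈ S) (hstat : IsStatQ Q c S xbar)
    (hcop : ∀ v ∈ TangentCone S xbar, v ≠ 0 → (∑ i, gradQ Q c xbar i * v i) = 0 →
      0 < ∑ k, ∑ l, Q k l * v k * v l) :
    IsStrongLocMin (quadF Q c α) S xbar := by
  refine ⟨hx, ?_⟩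
  by_contra hcon
  push_neg at hcon
  have key : ∀ k : ℕ, ∃ y, y ∈ S ∧ n2 (y - xbar) < 1/((k:ℝ)+1) ∧
      quadF Q c α y < quadF Q c α xbar + (1/((k:ℝ)+1)) * n2 (y - xbar) ^ 2 := by
    intro k
    obtain ⟨y, hy1, hy2, hy3⟩ := hcon (1/((k:ℝ)+1)) (by positivity) (1/((k:ℝ)+1)) (by positivity)
    exact ⟨y, hy1, hy2, by linarith⟩
  choose y hyS hyn hyq using key
  set d : ℕ → Fin n → ℝ := fun k => y k - xbar with hd
  have hd0 : ∀ k, d k ≠ 0 := by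
    intro k h0
    have hyx : y k = xbar := sub_eq_zero.1 h0
    have h := hyq k
    rw [hyx, sub_self, n2_eq_zero.2 rfl] at h
    norm_num at h
  have hr : ∀ k, 0 < n2 (d k) := fun k => n2_pos (hd0 k)
  set u : ℕ → Fin n → ℝ := fun k => (n2 (d k))⁻¹ • d k with hu
  have hu1 : ∀ k, n2 (u k) = 1 := by
    intro k
    rw [hu]
    rw [n2_smul, abs_of_pos (inv_pos.2 (hr k)), inv_mul_cancel₀ (ne_of_gt (hr k))]
  have huT : ∀ k, u k ∈ TangentCone S xbar := by
    intro k
    apply feasDir_subset_tangent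
    apply feasDir_smul (inv_pos.2 (hr k))
    exact ⟨1, one_pos, fun τ hτ => poly_convex hS hx (hyS k) (le_of_lt hτ.1) hτ.2⟩
  obtain ⟨ui, φ, hφ, hconv, hui1⟩ := seq_compact_unit hu1
  have hTclosed := (poly_tangent_facts hS hx).2
  have huiT : ui ∈ TangentCone S xbar :=
    hTclosed.mem_of_tendsto hconv (Filter.Eventually.of_forall (fun k => huT (φ k)))
  set G : (Fin n → ℝ) → ℝ := fun v => ∑ i, gradQ Q c xbar i * v i with hGdef
  set H : (Fin n → ℝ) → ℝ := fun v => ∑ k, ∑ l, Q k l * v k * v l with hHdef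
  have hGu0 : ∀ k, 0 ≤ G (u k) := by
    intro k
    rw [hu]
    show 0 ≤ ∑ i, gradQ Q c xbar i * ((n2 (d k))⁻¹ • d k) i
    rw [lin_smul]
    have h2 := hstat.2 (y k) (hyS k)
    have h3 : (∑ i, gradQ Q c xbar i * (y k i - xbar i)) = ∑ i, gradQ Q c xbar i * d k i := by
      apply Finset.sum_congr rfl; intro i _; rfl
    rw [h3] at h2
    have := inv_pos.2 (hr k)
    positivity
  have hqy : ∀ k, quadF Q c α (y k)
      = quadF Q c α xbar + n2 (d k) * G (u k) + (1/2) * (n2 (d k)) ^ 2 * H (u k) := by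
    intro k
    have hyk : y k = xbar + (1:ℝ) • d k := by rw [one_smul, hd, add_sub_cancel]
    rw [hyk, quad_expand Q hQ c α xbar (d k) 1]
    have hdk : d k = n2 (d k) • u k := by
      rw [hu, smul_smul, mul_inv_cancel₀ (ne_of_gt (hr k)), one_smul]
    have e1 : (∑ i, gradQ Q c xbar i * d k i) = n2 (d k) * G (u k) := by
      conv_lhs => rw [hdk]
      exact lin_smul _ _ _
    have e2 : (∑ a, ∑ b, Q a b * d k a * d k b) = (n2 (d k)) ^ 2 * H (u k) := by
      conv_lhs => rw [hdk]
      exact HQ_smul _ _ _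
    rw [e1, e2]
    ring
  have hineq : ∀ k, (n2 (d k)) * G (u k) + (1/2) * (n2 (d k)) ^ 2 * H (u k)
      < (1/((k:ℝ)+1)) * (n2 (d k)) ^ 2 := by
    intro k
    have := hyq k
    rw [hqy k] at this
    rw [hd] at *
    linarith
  have hineq2 : ∀ k, G (u k) + (1/2) * (n2 (d k)) * H (u k) < (1/((k:ℝ)+1)) * n2 (d k) := by
    intro k
    have h1 := hineq k
    have h2 := hr k
    nlinarith
  have hGconv : Tendsto (fun k => G (u (φ k))) atTop (𝓝 (G ui)) :=
    ((lin_continuous (gradQ Q c xbar)).tendsto ui).comp hconv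
  have hHconv : Tendsto (fun k => H (u (φ k))) atTop (𝓝 (H ui)) :=
    ((HQ_continuous Q).tendsto ui).comp hconv
  have hrconv : Tendsto (fun k => n2 (d (φ k))) atTop (𝓝 0) := by
    apply tendsto_of_tendsto_of_tendsto_of_le_of_le (g := fun _ : ℕ => (0:ℝ))
      (h := fun k : ℕ => 1 / ((φ k : ℝ) + 1)) tendsto_const_nhds (one_div_phi_tendsto hφ)
    · intro k; exact le_of_lt (hr (φ k))
    · intro k; exact le_of_lt (hyn (φ k))
  -- H ui ≤ 0
  have hHle : H ui ≤ 0 := by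
    have hub : ∀ k, (1/2) * H (u (φ k)) < 1/((φ k : ℝ)+1) := by
      intro k
      have h1 := hineq2 (φ k)
      have h2 := hGu0 (φ k)
      have h3 := hr (φ k)
      have h4 := hyn (φ k)
      nlinarith
    have hlim : Tendsto (fun k => (1/2) * H (u (φ k))) atTop (𝓝 ((1/2) * H ui)) :=
      tendsto_const_nhds.mul hHconv
    have := le_of_tendsto_of_tendsto' hlim (one_div_phi_tendsto hφ)
      (fun k => le_of_lt (hub k))
    linarith
  -- G ui = 0
  have hGge : 0 ≤ G ui :=
    ge_of_tendsto hGconv (Filter.Eventually.of_forall (fun k => hGu0 (φ k)))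
  have hGle : G ui ≤ 0 := by
    have hub : ∀ k, G (u (φ k)) ≤ n2 (d (φ k)) * (1/((φ k : ℝ)+1) - (1/2) * H (u (φ k))) := by
      intro k
      have h1 := hineq2 (φ k)
      have h3 := hr (φ k)
      nlinarith
    have hlim : Tendsto (fun k => n2 (d (φ k)) * (1/((φ k : ℝ)+1) - (1/2) * H (u (φ k))))
        atTop (𝓝 (0 * (0 - (1/2) * H ui))) :=
      hrconv.mul ((one_div_phi_tendsto hφ).sub (tendsto_const_nhds.mul hHconv))
    rw [zero_mul] at hlim
    exact le_of_tendsto_of_tendsto' hGconv hlim hub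
  have hG0 : G ui = 0 := le_antisymm hGle hGge
  have hfin := hcop ui huiT (ne_zero_of_n2_one hui1) hG0
  have hfin2 : 0 < H ui := hfin
  linarith

lemma stat_cop_isolated {n : ℕ} {S : Set (Fin n → ℝ)} (hS : IsPolyhedron S)
    (Q : Matrix (Fin n) (Fin n) ℝ) (hQ : ∀ k l, Q k l = Q l k) (c : Fin n → ℝ)
    {xbar : Fin n → ℝ} (hx : xbar ∈ S) (hstat : IsStatQ Q c S xbar)
    (hcop : ∀ v ∈ TangentCone S xbar, v ≠ 0 → (∑ i, gradQ Q c xbar i * v i) = 0 →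
      0 < ∑ k, ∑ l, Q k l * v k * v l) :
    ∃ ε > (0:ℝ), ∀ y, IsStatQ Q c S y → n2 (y - xbar) < ε → y = xbar := by
  by_contra hcon
  push_neg at hcon
  have key : ∀ k : ℕ, ∃ y, IsStatQ Q c S y ∧ n2 (y - xbar) < 1/((k:ℝ)+1) ∧ y ≠ xbar := by
    intro k
    obtain ⟨y, hy1, hy2, hy3⟩ := hcon (1/((k:ℝ)+1)) (by positivity)
    exact ⟨y, hy1, hy2, hy3⟩
  choose y hyStat hyn hyne using key
  set d : ℕ → Fin n → ℝ := fun k => y k - xbar with hd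
  have hd0 : ∀ k, d k ≠ 0 := fun k h0 => hyne k (sub_eq_zero.1 h0)
  have hr : ∀ k, 0 < n2 (d k) := fun k => n2_pos (hd0 k)
  set u : ℕ → Fin n → ℝ := fun k => (n2 (d k))⁻¹ • d k with hu
  have hu1 : ∀ k, n2 (u k) = 1 := by
    intro k
    rw [hu, n2_smul, abs_of_pos (inv_pos.2 (hr k)), inv_mul_cancel₀ (ne_of_gt (hr k))]
  have huT : ∀ k, u k ∈ TangentCone S xbar := by
    intro k
    apply feasDir_subset_tangent
    apply feasDir_smul (inv_pos.2 (hr k))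
    exact ⟨1, one_pos, fun τ hτ => poly_convex hS hx (hyStat k).1 (le_of_lt hτ.1) hτ.2⟩
  obtain ⟨ui, φ, hφ, hconv, hui1⟩ := seq_compact_unit hu1
  have hTclosed := (poly_tangent_facts hS hx).2
  have huiT : ui ∈ TangentCone S xbar :=
    hTclosed.mem_of_tendsto hconv (Filter.Eventually.of_forall (fun k => huT (φ k)))
  set G : (Fin n → ℝ) → ℝ := fun v => ∑ i, gradQ Q c xbar i * v i with hGdef
  set H : (Fin n → ℝ) → ℝ := fun v => ∑ k, ∑ l, Q k l * v k * v l with hHdef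
  have hdu : ∀ k, d k = n2 (d k) • u k := by
    intro k
    rw [hu, smul_smul, mul_inv_cancel₀ (ne_of_gt (hr k)), one_smul]
  have hGd : ∀ k, (∑ i, gradQ Q c xbar i * d k i) = n2 (d k) * G (u k) := by
    intro k
    conv_lhs => rw [hdu k]
    exact lin_smul _ _ _
  have hGu0 : ∀ k, 0 ≤ G (u k) := by
    intro k
    have h2 := hstat.2 (y k) (hyStat k).1
    have h3 : (∑ i, gradQ Q c xbar i * (y k i - xbar i)) = ∑ i, gradQ Q c xbar i * d k i := by
      apply Finset.sum_congr rfl; intro i _; rfl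
    rw [h3, hGd k] at h2
    have h4 := hr k
    nlinarith
  -- from stationarity of y k at direction xbar:
  have hkey : ∀ k, G (u k) + n2 (d k) * H (u k) ≤ 0 := by
    intro k
    have h2 := (hyStat k).2 xbar hx
    -- ∑ gradQ (y k) i * (xbar i - y k i) ≥ 0
    have hyk : y k = xbar + d k := by rw [hd, add_sub_cancel]
    have hw : ∀ i, xbar i - y k i = -(d k i) := by
      intro i
      rw [hd]
      simp
    have e1 : (∑ i, gradQ Q c (y k) i * (xbar i - y k i))
        = -((∑ i, gradQ Q c xbar i * d k i) + ∑ i, ∑ j, Q i j * d k j * d k i) := by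
      have s1 : (∑ i, gradQ Q c (y k) i * (xbar i - y k i))
          = ∑ i, gradQ Q c (xbar + d k) i * (fun i => -(d k i)) i := by
        apply Finset.sum_congr rfl; intro i _
        rw [← hyk, hw i]
      rw [s1, grad_shift]
      have e3 : (∑ i, gradQ Q c xbar i * (fun i => -(d k i)) i)
          = -(∑ i, gradQ Q c xbar i * d k i) := by
        rw [← Finset.sum_neg_distrib]
        apply Finset.sum_congr rfl; intro i _
        ring
      have e4 : (∑ i, ∑ j, Q i j * d k j * (fun i => -(d k i)) i)
          = -(∑ i, ∑ j, Q i j * d k j * d k i) := by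
        rw [← Finset.sum_neg_distrib]
        apply Finset.sum_congr rfl; intro i _
        rw [← Finset.sum_neg_distrib]
        apply Finset.sum_congr rfl; intro j _
        ring
      rw [e3, e4]
      ring
    rw [e1] at h2
    have hHd : (∑ i, ∑ j, Q i j * d k j * d k i) = (n2 (d k))^2 * H (u k) := by
      rw [HQ_swap Q hQ]
      conv_lhs => rw [hdu k]
      exact HQ_smul _ _ _
    rw [hHd, hGd k] at h2
    have h4 := hr k
    nlinarith
  have hGconv : Tendsto (fun k => G (u (φ k))) atTop (𝓝 (G ui)) :=
    ((lin_continuous (gradQ Q c xbar)).tendsto ui).comp hconv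
  have hHconv : Tendsto (fun k => H (u (φ k))) atTop (𝓝 (H ui)) :=
    ((HQ_continuous Q).tendsto ui).comp hconv
  have hrconv : Tendsto (fun k => n2 (d (φ k))) atTop (𝓝 0) := by
    apply tendsto_of_tendsto_of_tendsto_of_le_of_le (g := fun _ : ℕ => (0:ℝ))
      (h := fun k : ℕ => 1 / ((φ k : ℝ) + 1)) tendsto_const_nhds (one_div_phi_tendsto hφ)
    · intro k; exact le_of_lt (hr (φ k))
    · intro k; exact le_of_lt (hyn (φ k))
  have hGge : 0 ≤ G ui :=
    ge_of_tendsto hGconv (Filter.Eventually.of_forall (fun k => hGu0 (φ k)))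
  have hGle : G ui ≤ 0 := by
    have hub : ∀ k, G (u (φ k)) ≤ n2 (d (φ k)) * (- H (u (φ k))) := by
      intro k
      have h1 := hkey (φ k)
      nlinarith
    have hlim : Tendsto (fun k => n2 (d (φ k)) * (- H (u (φ k)))) atTop (𝓝 (0 * (- H ui))) :=
      hrconv.mul hHconv.neg
    rw [zero_mul] at hlim
    exact le_of_tendsto_of_tendsto' hGconv hlim hub
  have hG0 : G ui = 0 := le_antisymm hGle hGge
  have hHle : H ui ≤ 0 := by
    have hub : ∀ k, n2 (d (φ k)) * H (u (φ k)) ≤ - G (u (φ k)) := by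
      intro k
      have h1 := hkey (φ k)
      linarith
    have hlim : Tendsto (fun k => n2 (d (φ k)) * H (u (φ k))) atTop (𝓝 (0 * H ui)) :=
      hrconv.mul hHconv
    rw [zero_mul] at hlim
    have h2 := le_of_tendsto_of_tendsto' hlim hGconv.neg hub
    -- 0 ≤ - G ui, combined with下: we need H ui ≤ 0 differently
    by_contra hpos
    push_neg at hpos
    -- eventually n2 d * H u > 0 but also ≤ -G u → -G ui ≥ 0 fine; need another route
    -- use: H (u (φ k)) ≤ - G (u (φ k)) / n2 (d (φ k)) ≤ 0 since G ≥ 0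
    have hub2 : ∀ k, H (u (φ k)) ≤ 0 := by
      intro k
      have h1 := hkey (φ k)
      have h2 := hGu0 (φ k)
      have h3 := hr (φ k)
      nlinarith
    have := le_of_tendsto hHconv (Filter.Eventually.of_forall hub2)
    linarith
  have hfin := hcop ui huiT (ne_zero_of_n2_one hui1) hG0
  have hfin2 : 0 < H ui := hfin
  linarith

lemma strict_to_locmin {n : ℕ} {f : (Fin n → ℝ) → ℝ} {S : Set (Fin n → ℝ)} {xbar : Fin n → ℝ}
    (h : IsStrictLocMin f S xbar) : IsLocMin' f S xbar := by
  obtain ⟨hx, ε, hε, hs⟩ := h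
  refine ⟨hx, ε, hε, fun y hy hn => ?_⟩
  by_cases hxy : y = xbar
  · rw [hxy]
  · exact le_of_lt (hs y hy hn hxy)

lemma strong_to_strict {n : ℕ} {f : (Fin n → ℝ) → ℝ} {S : Set (Fin n → ℝ)} {xbar : Fin n → ℝ}
    (h : IsStrongLocMin f S xbar) : IsStrictLocMin f S xbar := by
  obtain ⟨hx, cc, hcc, ε, hε, hs⟩ := h
  refine ⟨hx, ε, hε, fun y hy hn hne => ?_⟩
  have h1 := hs y hy hn
  have h2 : 0 < n2 (y - xbar) := n2_pos (fun h0 => hne (sub_eq_zero.1 h0))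
  have h3 := mul_pos hcc (pow_pos h2 2)
  linarith

lemma locmin_crit_nonneg {n : ℕ} {S : Set (Fin n → ℝ)} (hS : IsPolyhedron S)
    (Q : Matrix (Fin n) (Fin n) ℝ) (hQ : ∀ k l, Q k l = Q l k) (c : Fin n → ℝ) (α : ℝ)
    {xbar : Fin n → ℝ} (hmin : IsLocMin' (quadF Q c α) S xbar)
    {v : Fin n → ℝ} (hv : v ∈ TangentCone S xbar)
    (hG : (∑ i, gradQ Q c xbar i * v i) = 0) :
    0 ≤ ∑ k, ∑ l, Q k l * v k * v l := by
  obtain ⟨hxS, ε, hε, hm⟩ := hmin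
  obtain ⟨δ, hδ, hfeas⟩ := (poly_tangent_facts hS hxS).1 ▸ hv
  set τ := min δ (ε / (n2 v + 1)) with hτ
  have hn2v := n2_nonneg v
  have hτ0 : 0 < τ := lt_min hδ (by positivity)
  have hmem : xbar + τ • v ∈ S := hfeas τ ⟨hτ0, min_le_left _ _⟩
  have hτε : τ * n2 v < ε := by
    have h1 : τ ≤ ε / (n2 v + 1) := min_le_right _ _
    rw [le_div_iff₀ (by positivity)] at h1
    nlinarith
  have hsmall : n2 (xbar + τ • v - xbar) < ε := by
    rw [add_sub_cancel_left, n2_smul, abs_of_pos hτ0]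
    exact hτε
  have hval := hm _ hmem hsmall
  rw [quad_expand Q hQ c α xbar v τ, hG] at hval
  nlinarith [pow_pos hτ0 2]

lemma crit_zero_point {n : ℕ} {S : Set (Fin n → ℝ)} (hS : IsPolyhedron S)
    (Q : Matrix (Fin n) (Fin n) ℝ) (hQ : ∀ k l, Q k l = Q l k) (c : Fin n → ℝ) (α : ℝ)
    {xbar : Fin n → ℝ} (hxS : xbar ∈ S)
    {v : Fin n → ℝ} (hv : v ∈ TangentCone S xbar) (hv0 : v ≠ 0)
    (hG : (∑ i, gradQ Q c xbar i * v i) = 0) (hH : (∑ k, ∑ l, Q k l * v k * v l) = 0) :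
    ∀ η > (0:ℝ), ∃ z ∈ S, z ≠ xbar ∧ n2 (z - xbar) < η ∧
      quadF Q c α z = quadF Q c α xbar := by
  intro η hη
  obtain ⟨δ, hδ, hfeas⟩ := (poly_tangent_facts hS hxS).1 ▸ hv
  set τ := min δ (η / (n2 v + 1)) with hτ
  have hn2v := n2_nonneg v
  have hτ0 : 0 < τ := lt_min hδ (by positivity)
  have hmem : xbar + τ • v ∈ S := hfeas τ ⟨hτ0, min_le_left _ _⟩
  have hτε : τ * n2 v < η := by
    have h1 : τ ≤ η / (n2 v + 1) := min_le_right _ _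
    rw [le_div_iff₀ (by positivity)] at h1
    nlinarith
  refine ⟨xbar + τ • v, hmem, ?_, ?_, ?_⟩
  · intro h0
    have : τ • v = 0 := by
      have := congrArg (fun w => w - xbar) h0
      simpa [add_sub_cancel_left] using this
    rcases smul_eq_zero.1 this with h | h
    · exact (ne_of_gt hτ0) h
    · exact hv0 h
  · rw [add_sub_cancel_left, n2_smul, abs_of_pos hτ0]
    exact hτε
  · rw [quad_expand Q hQ c α xbar v τ, hG, hH]
    ring

lemma strict_to_cop {n : ℕ} {S : Set (Fin n → ℝ)} (hS : IsPolyhedron S)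
    (Q : Matrix (Fin n) (Fin n) ℝ) (hQ : ∀ k l, Q k l = Q l k) (c : Fin n → ℝ) (α : ℝ)
    {xbar : Fin n → ℝ} (h : IsStrictLocMin (quadF Q c α) S xbar) :
    ∀ v ∈ TangentCone S xbar, v ≠ 0 → (∑ i, gradQ Q c xbar i * v i) = 0 →
      0 < ∑ k, ∑ l, Q k l * v k * v l := by
  intro v hv hv0 hG
  have hnn := locmin_crit_nonneg hS Q hQ c α (strict_to_locmin h) hv hG
  rcases lt_or_eq_of_le hnn with hpos | heq
  · exact hpos
  · exfalso
    obtain ⟨hxS, ε, hε, hs⟩ := h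
    obtain ⟨z, hzS, hzne, hzn, hzval⟩ := crit_zero_point hS Q hQ c α hxS hv hv0 hG heq.symm ε hε
    have := hs z hzS hzn hzne
    linarith [hzval.ge, hzval.le, this]

lemma iso_to_cop {n : ℕ} {S : Set (Fin n → ℝ)} (hS : IsPolyhedron S)
    (Q : Matrix (Fin n) (Fin n) ℝ) (hQ : ∀ k l, Q k l = Q l k) (c : Fin n → ℝ) (α : ℝ)
    {xbar : Fin n → ℝ} (hmin : IsLocMin' (quadF Q c α) S xbar)
    (hiso : ∃ ε > (0:ℝ), ∀ z, IsLocMin' (quadF Q c α) S z → n2 (z - xbar) < ε → z = xbar) :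
    ∀ v ∈ TangentCone S xbar, v ≠ 0 → (∑ i, gradQ Q c xbar i * v i) = 0 →
      0 < ∑ k, ∑ l, Q k l * v k * v l := by
  intro v hv hv0 hG
  have hnn := locmin_crit_nonneg hS Q hQ c α hmin hv hG
  rcases lt_or_eq_of_le hnn with hpos | heq
  · exact hpos
  · exfalso
    obtain ⟨hxS, ε0, hε0, hm⟩ := hmin
    obtain ⟨ε1, hε1, hisol⟩ := hiso
    set η := min (ε0 / 2) ε1 with hη
    have hηpos : 0 < η := lt_min (by linarith) hε1
    obtain ⟨z, hzS, hzne, hzn, hzval⟩ :=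
      crit_zero_point hS Q hQ c α hxS hv hv0 hG heq.symm η hηpos
    have hzlocmin : IsLocMin' (quadF Q c α) S z := by
      refine ⟨hzS, ε0 / 2, by linarith, fun w hw hn => ?_⟩
      have htri : n2 (w - xbar) < ε0 := by
        have h1 : n2 (w - xbar) ≤ n2 (w - z) + n2 (z - xbar) := by
          have := n2_triangle (w - z) (z - xbar)
          rw [sub_add_sub_cancel] at this
          exact this
        have h2 : n2 (z - xbar) < ε0 / 2 := lt_of_lt_of_le hzn (min_le_left _ _)
        linarith
      rw [hzval]
      exact hm w hw htri
    exact hzne (hisol z hzlocmin (lt_of_lt_of_le hzn (min_le_right _ _)))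

lemma dist_le_n2 {n : ℕ} (y x : Fin n → ℝ) : dist y x ≤ n2 (y - x) := by
  rw [dist_pi_le_iff (n2_nonneg _)]
  intro i
  rw [Real.dist_eq]
  exact le_trans (le_of_eq (by simp [Pi.sub_apply])) (abs_le_n2 (y - x) i)

lemma dirDeriv_unique {n : ℕ} {f : (Fin n → ℝ) → ℝ} {x v : Fin n → ℝ} {d d' : ℝ}
    (h : HasDirDeriv f x v d) (h' : HasDirDeriv f x v d') : d = d' :=
  tendsto_nhds_unique h h'

lemma dirDeriv2_unique {n : ℕ} {f : (Fin n → ℝ) → ℝ} {x v : Fin n → ℝ} {d₁ d₂ d₂' : ℝ}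
    (h : HasDirDeriv2 f x v d₁ d₂) (h' : HasDirDeriv2 f x v d₁ d₂') : d₂ = d₂' :=
  tendsto_nhds_unique h.2 h'.2

lemma active_locality {n I : ℕ} (P : Fin I → Set (Fin n → ℝ)) (hP : ∀ i, IsPolyhedron (P i))
    (hcover : (⋃ i, P i) = Set.univ) (xbar : Fin n → ℝ) :
    ∃ δ > (0:ℝ), ∀ y : Fin n → ℝ, n2 (y - xbar) < δ → ∃ i, xbar ∈ P i ∧ y ∈ P i := by
  set U : Set (Fin n → ℝ) := ⋃ i ∈ {i : Fin I | xbar ∉ P i}, P i with hU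
  have hUclosed : IsClosed U :=
    Set.Finite.isClosed_biUnion (Set.toFinite _) (fun i _ => poly_closed (hP i))
  have hxU : xbar ∉ U := by
    intro h
    obtain ⟨i, hi, hmem⟩ := Set.mem_iUnion₂.1 h
    exact hi hmem
  have hopen : IsOpen Uᶜ := hUclosed.isOpen_compl
  obtain ⟨δ, hδ, hball⟩ := Metric.isOpen_iff.1 hopen xbar hxU
  refine ⟨δ, hδ, fun y hy => ?_⟩
  have hyU : y ∉ U := by
    apply hball
    rw [Metric.mem_ball]
    exact lt_of_le_of_lt (dist_le_n2 y xbar) hy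
  have hyP : ∃ i, y ∈ P i := by
    have : y ∈ ⋃ i, P i := by rw [hcover]; trivial
    exact Set.mem_iUnion.1 this
  obtain ⟨i, hi⟩ := hyP
  refine ⟨i, ?_, hi⟩
  by_contra hxi
  exact hyU (Set.mem_iUnion₂.2 ⟨i, hxi, hi⟩)

lemma radial_piece {n I : ℕ} (P : Fin I → Set (Fin n → ℝ)) (hP : ∀ i, IsPolyhedron (P i))
    (hcover : (⋃ i, P i) = Set.univ) (y v : Fin n → ℝ) :
    ∃ i, y ∈ P i ∧ ∃ δ > (0:ℝ), ∀ τ ∈ Set.Icc (0:ℝ) δ, y + τ • v ∈ P i := by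
  have hselect : ∀ k : ℕ, ∃ i : Fin I, y + (1/((k:ℝ)+1)) • v ∈ P i := by
    intro k
    have : y + (1/((k:ℝ)+1)) • v ∈ ⋃ i, P i := by rw [hcover]; trivial
    exact Set.mem_iUnion.1 this
  choose σ hσ using hselect
  have hI : Nonempty (Fin I) := ⟨σ 0⟩
  haveI : Finite (Fin I) := inferInstance
  obtain ⟨i, hfib⟩ := Finite.exists_infinite_fiber σ
  have hinf : Set.Infinite (σ ⁻¹' {i}) := Set.infinite_coe_iff.1 hfib
  -- arbitrary large indices in the fiber
  have hlarge : ∀ m : ℕ, ∃ k, m < k ∧ σ k = i := by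
    intro m
    obtain ⟨k, hk1, hk2⟩ := hinf.exists_gt m
    exact ⟨k, hk2, hk1⟩
  choose kf hkf1 hkf2 using hlarge
  -- y ∈ P i, via closedness
  have hyPi : y ∈ P i := by
    have hseq : Tendsto (fun m : ℕ => y + (1/((kf m : ℝ)+1)) • v) atTop (𝓝 y) := by
      have h1 : Tendsto (fun m : ℕ => 1/((kf m : ℝ)+1)) atTop (𝓝 0) := by
        apply tendsto_of_tendsto_of_tendsto_of_le_of_le (g := fun _ : ℕ => (0:ℝ))
          (h := fun m : ℕ => 1 / ((m : ℝ) + 1)) tendsto_const_nhds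
          tendsto_one_div_add_atTop_nhds_zero_nat
        · intro m; positivity
        · intro m
          apply div_le_div_of_nonneg_left (by norm_num) (by positivity)
          have := (Nat.cast_le (α := ℝ)).2 (le_of_lt (hkf1 m))
          linarith
      have := tendsto_const_nhds (x := y) (f := atTop (α := ℕ)).add (h1.smul_const v)
      simpa using this
    apply (poly_closed (hP i)).mem_of_tendsto hseq
    exact Filter.Eventually.of_forall (fun m => hkf2 m ▸ hσ (kf m))
  -- segment
  set δ := 1/((kf 0 : ℝ)+1) with hδdef
  have hδ : 0 < δ := by positivity
  have hend : y + δ • v ∈ P i := hkf2 0 ▸ hσ (kf 0)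
  refine ⟨i, hyPi, δ, hδ, fun τ hτ => ?_⟩
  have ht0 : 0 ≤ τ/δ := div_nonneg hτ.1 hδ.le
  have ht1 : τ/δ ≤ 1 := by rw [div_le_one hδ]; exact hτ.2
  have hmem := poly_convex (hP i) hyPi hend ht0 ht1
  have heq : y + (τ/δ) • (y + δ • v - y) = y + τ • v := by
    rw [add_sub_cancel_left, smul_smul, div_mul_cancel₀ _ (ne_of_gt hδ)]
  rw [heq] at hmem
  exact hmem

lemma poly_inter {n : ℕ} {S T : Set (Fin n → ℝ)} (hS : IsPolyhedron S) (hT : IsPolyhedron T) :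
    IsPolyhedron (S ∩ T) := by
  obtain ⟨m1, A1, b1, rfl⟩ := hS
  obtain ⟨m2, A2, b2, rfl⟩ := hT
  refine ⟨m1 + m2, Matrix.of (fun i j => Fin.addCases (fun i1 => A1 i1 j) (fun i2 => A2 i2 j) i),
    fun i => Fin.addCases (fun i1 => b1 i1) (fun i2 => b2 i2) i, ?_⟩
  ext x
  simp only [Set.mem_inter_iff, Set.mem_setOf_eq, Matrix.of_apply]
  constructor
  · rintro ⟨h1, h2⟩ i
    refine Fin.addCases (fun i1 => ?_) (fun i2 => ?_) i
    · simpa using h1 i1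
    · simpa using h2 i2
  · intro h
    constructor
    · intro i1
      have := h (Fin.castAdd m2 i1)
      simpa using this
    · intro i2
      have := h (Fin.natAdd m1 i2)
      simpa using this

lemma f_radial_deriv {n I : ℕ} (f : (Fin n → ℝ) → ℝ)
    (P : Fin I → Set (Fin n → ℝ)) (hP : ∀ i, IsPolyhedron (P i))
    (hcover : (⋃ i, P i) = Set.univ)
    (Qm : Fin I → Matrix (Fin n) (Fin n) ℝ) (hQ : ∀ i k l, Qm i k l = Qm i l k)
    (c : Fin I → Fin n → ℝ) (α : Fin I → ℝ)
    (hfq : ∀ i, ∀ x ∈ P i, f x = quadF (Qm i) (c i) (α i) x)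
    (y v : Fin n → ℝ) :
    ∃ j, y ∈ P j ∧ (∃ δ > (0:ℝ), ∀ τ ∈ Set.Icc (0:ℝ) δ, y + τ • v ∈ P j) ∧
      HasDirDeriv2 f y v (∑ i, gradQ (Qm j) (c j) y i * v i)
        (∑ k, ∑ l, Qm j k l * v k * v l) := by
  obtain ⟨j, hyPj, δ, hδ, hseg⟩ := radial_piece P hP hcover y v
  refine ⟨j, hyPj, ⟨δ, hδ, hseg⟩, ?_⟩
  apply hasDirDeriv2_of_segment f (Qm j) (hQ j) (c j) (α j) y v hδ
  intro τ hτ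
  exact hfq j _ (hseg τ hτ)

lemma f_locmin_stat {n I : ℕ} (f : (Fin n → ℝ) → ℝ)
    (P : Fin I → Set (Fin n → ℝ)) (hP : ∀ i, IsPolyhedron (P i))
    (hcover : (⋃ i, P i) = Set.univ)
    (Qm : Fin I → Matrix (Fin n) (Fin n) ℝ) (hQ : ∀ i k l, Qm i k l = Qm i l k)
    (c : Fin I → Fin n → ℝ) (α : Fin I → ℝ)
    (hfq : ∀ i, ∀ x ∈ P i, f x = quadF (Qm i) (c i) (α i) x)
    {X : Set (Fin n → ℝ)} (hX : IsPolyhedron X)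
    {z : Fin n → ℝ} (hz : IsLocMin' f X z) : IsStatF f X z := by
  obtain ⟨hzX, ε0, hε0, hmin⟩ := hz
  refine ⟨hzX, fun x hx => ?_⟩
  obtain ⟨j, hzPj, _, hDD⟩ :=
    f_radial_deriv f P hP hcover Qm hQ c α hfq z (x - z)
  refine ⟨_, hDD.1, ?_⟩
  set v := x - z with hv
  have hn2v := n2_nonneg v
  set T := min 1 (ε0 / (n2 v + 1)) with hT
  have hT0 : 0 < T := lt_min one_pos (by positivity)
  apply ge_of_tendsto hDD.1
  rw [Filter.eventually_iff]
  have hIoc : Set.Ioc (0:ℝ) T ∈ 𝓝[>] (0:ℝ) := Ioc_mem_nhdsGT_of_mem ⟨le_refl 0, hT0⟩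
  apply Filter.mem_of_superset hIoc
  intro τ hτ
  have hmem : z + τ • v ∈ X := poly_convex hX hzX hx (le_of_lt hτ.1)
    (le_trans hτ.2 (min_le_left _ _))
  have hsmall : n2 (z + τ • v - z) < ε0 := by
    rw [add_sub_cancel_left, n2_smul, abs_of_pos hτ.1]
    have h1 : τ ≤ ε0 / (n2 v + 1) := le_trans hτ.2 (min_le_right _ _)
    rw [le_div_iff₀ (by positivity)] at h1
    nlinarith
  have := hmin _ hmem hsmall
  show 0 ≤ (f (z + τ • v) - f z) / τ
  apply div_nonneg (by linarith) (le_of_lt hτ.1)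

lemma seg_dirDeriv {n : ℕ} (f : (Fin n → ℝ) → ℝ) {S : Set (Fin n → ℝ)} (hS : IsPolyhedron S)
    (Q : Matrix (Fin n) (Fin n) ℝ) (hQs : ∀ k l, Q k l = Q l k) (c : Fin n → ℝ) (α : ℝ)
    (hfqS : ∀ w ∈ S, f w = quadF Q c α w) {y x : Fin n → ℝ} (hy : y ∈ S) (hx : x ∈ S) :
    HasDirDeriv2 f y (x - y) (∑ i, gradQ Q c y i * (x - y) i)
      (∑ k, ∑ l, Q k l * (x - y) k * (x - y) l) := by
  apply hasDirDeriv2_of_segment f Q hQs c α y (x - y) one_pos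
  intro τ hτ
  exact hfqS _ (poly_convex hS hy hx hτ.1 hτ.2)

/-- Equivalent characterizations of strong/strict/isolated local
minimizers of a linearly constrained PLQ program, including the piecewise versions on the
active pieces, the second-order sufficient condition, and strict copositivity on the
critical cones of the pieces. -/
theorem stmt11 {n I : ℕ} (f : (Fin n → ℝ) → ℝ) (hf : Continuous f)
    (P : Fin I → Set (Fin n → ℝ)) (hP : ∀ i, IsPolyhedron (P i))
    (hcover : (⋃ i, P i) = Set.univ)
    (Qm : Fin I → Matrix (Fin n) (Fin n) ℝ) (hQ : ∀ i k l, Qm i k l = Qm i l k)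
    (c : Fin I → Fin n → ℝ) (α : Fin I → ℝ)
    (hfq : ∀ i, ∀ x ∈ P i, f x = quadF (Qm i) (c i) (α i) x)
    (X : Set (Fin n → ℝ)) (hX : IsPolyhedron X)
    (xbar : Fin n → ℝ) (hxbar : xbar ∈ X) :
    -- abbreviations for the ten statements
    let A1 := IsStrongLocMin f X xbar
    let A2 := IsStrictLocMin f X xbar
    let A3 := IsIsolatedLocMin f X xbar
    let A4 := IsIsolatedStatF f X xbar ∧ IsLocMin' f X xbar
    let B1 := ∀ i, xbar ∈ P i → IsStrongLocMin (quadF (Qm i) (c i) (α i)) (X ∩ P i) xbar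
    let B2 := ∀ i, xbar ∈ P i → IsStrictLocMin (quadF (Qm i) (c i) (α i)) (X ∩ P i) xbar
    let B3 := ∀ i, xbar ∈ P i → IsIsolatedLocMin (quadF (Qm i) (c i) (α i)) (X ∩ P i) xbar
    let B4 := ∀ i, xbar ∈ P i →
      (IsIsolatedStatQ (Qm i) (c i) (X ∩ P i) xbar ∧
       IsLocMin' (quadF (Qm i) (c i) (α i)) (X ∩ P i) xbar)
    let C := (∀ x ∈ X, ∃ d, HasDirDeriv f xbar (x - xbar) d ∧ 0 ≤ d) ∧
      (∀ x ∈ X, x ≠ xbar → ∀ d₁, HasDirDeriv f xbar (x - xbar) d₁ → d₁ = 0 →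
        ∃ d₂, HasDirDeriv2 f xbar (x - xbar) d₁ d₂ ∧ 0 < d₂)
    let D1 := (∀ x ∈ X, ∃ d, HasDirDeriv f xbar (x - xbar) d ∧ 0 ≤ d) ∧
      (∀ v ∈ TangentCone X xbar, v ≠ 0 → ∀ d₁, HasDirDeriv f xbar v d₁ → d₁ = 0 →
        ∃ d₂, HasDirDeriv2 f xbar v d₁ d₂ ∧ 0 < d₂)
    let D2 := ∀ i, xbar ∈ P i →
      (IsStatQ (Qm i) (c i) (X ∩ P i) xbar ∧
       ∀ v ∈ TangentCone (X ∩ P i) xbar, v ≠ 0 →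
         (∑ k, gradQ (Qm i) (c i) xbar k * v k) = 0 →
         0 < ∑ k, ∑ l, Qm i k l * v k * v l)
    (A1 ↔ A2) ∧ (A2 ↔ A3) ∧ (A3 ↔ A4) ∧ (A4 ↔ B1) ∧ (B1 ↔ B2) ∧ (B2 ↔ B3) ∧
    (B3 ↔ B4) ∧ (B4 ↔ C) ∧ (C ↔ D1) ∧ (D1 ↔ D2) := by
  intro A1 A2 A3 A4 B1 B2 B3 B4 C D1 D2
  obtain ⟨δloc, hδloc, hloc⟩ := active_locality P hP hcover xbar
  have hI : Nonempty (Fin I) := by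
    have : xbar ∈ ⋃ i, P i := by rw [hcover]; trivial
    obtain ⟨i, _⟩ := Set.mem_iUnion.1 this
    exact ⟨i⟩
  haveI := hI
  have hXPi : ∀ i, IsPolyhedron (X ∩ P i) := fun i => poly_inter hX (hP i)
  -- D2 → B1
  have hD2B1 : D2 → B1 := by
    intro h i hi
    exact stat_cop_strong (hXPi i) (Qm i) (hQ i) (c i) (α i) ⟨hxbar, hi⟩ (h i hi).1 (h i hi).2
  -- B1 → A1
  have hB1A1 : B1 → A1 := by
    intro h
    refine ⟨hxbar, ?_⟩
    have hchoice : ∀ i : Fin I, ∃ ci, ∃ εi, (0:ℝ) < ci ∧ (0:ℝ) < εi ∧ (xbar ∈ P i →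
        ∀ y ∈ X ∩ P i, n2 (y - xbar) < εi →
          quadF (Qm i) (c i) (α i) xbar + ci * n2 (y - xbar) ^ 2
            ≤ quadF (Qm i) (c i) (α i) y) := by
      intro i
      by_cases hi : xbar ∈ P i
      · obtain ⟨_, ci, hci, εi, hεi, hs⟩ := h i hi
        exact ⟨ci, εi, hci, hεi, fun _ => hs⟩
      · exact ⟨1, 1, one_pos, one_pos, fun hh => absurd hh hi⟩
    choose cf εf hcf hεf hsf using hchoice
    set cmin := Finset.univ.inf' Finset.univ_nonempty cf with hcmindef
    set εmin := min δloc (Finset.univ.inf' Finset.univ_nonempty εf) with hεmindef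
    have hcmin : 0 < cmin := by
      rw [hcmindef, Finset.lt_inf'_iff]
      exact fun i _ => hcf i
    have hεmin : 0 < εmin := by
      apply lt_min hδloc
      rw [Finset.lt_inf'_iff]
      exact fun i _ => hεf i
    refine ⟨cmin, hcmin, εmin, hεmin, fun y hy hn => ?_⟩
    obtain ⟨i, hxi, hyi⟩ := hloc y (lt_of_lt_of_le hn (min_le_left _ _))
    have h1 := hsf i hxi y ⟨hy, hyi⟩ (lt_of_lt_of_le hn
      (le_trans (min_le_right _ _) (Finset.inf'_le _ (Finset.mem_univ i))))
    rw [← hfq i y hyi, ← hfq i xbar hxi] at h1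
    have h2 : cmin * n2 (y - xbar) ^ 2 ≤ cf i * n2 (y - xbar) ^ 2 :=
      mul_le_mul_of_nonneg_right (Finset.inf'_le _ (Finset.mem_univ i)) (by positivity)
    linarith
  -- A2 → B2
  have hA2B2 : A2 → B2 := by
    intro h i hi
    obtain ⟨_, ε, hε, hs⟩ := h
    refine ⟨⟨hxbar, hi⟩, ε, hε, fun y hy hn hne => ?_⟩
    rw [← hfq i y hy.2, ← hfq i xbar hi]
    exact hs y hy.1 hn hne
  -- B2 → D2
  have hB2D2 : B2 → D2 := by
    intro h i hi
    exact ⟨locmin_stat (hXPi i) (Qm i) (hQ i) (c i) (α i) (strict_to_locmin (h i hi)),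
      strict_to_cop (hXPi i) (Qm i) (hQ i) (c i) (α i) (h i hi)⟩
  have hB1B2 : B1 → B2 := fun h i hi => strong_to_strict (h i hi)
  have hD2B2 : D2 → B2 := fun h => hB1B2 (hD2B1 h)
  have hB1D2 : B1 → D2 := fun h => hB2D2 (hB1B2 h)
  have hA1A2 : A1 → A2 := strong_to_strict
  have hA2D2 : A2 → D2 := fun h => hB2D2 (hA2B2 h)
  have hD2A1 : D2 → A1 := fun h => hB1A1 (hD2B1 h)
  have hD2A2 : D2 → A2 := fun h => hA1A2 (hD2A1 h)
  have hA1D2 : A1 → D2 := fun h => hA2D2 (hA1A2 h)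
  -- D2 → B4 and B4 → D2
  have hD2B4 : D2 → B4 := by
    intro h i hi
    have hiso := stat_cop_isolated (hXPi i) (Qm i) (hQ i) (c i) ⟨hxbar, hi⟩ (h i hi).1 (h i hi).2
    exact ⟨⟨(h i hi).1, hiso⟩, strict_to_locmin (strong_to_strict (hD2B1 h i hi))⟩
  have hB4D2 : B4 → D2 := by
    intro h i hi
    obtain ⟨⟨hstat, ε, hε, hisoS⟩, hmin⟩ := h i hi
    refine ⟨hstat, ?_⟩
    apply iso_to_cop (hXPi i) (Qm i) (hQ i) (c i) (α i) hmin
    exact ⟨ε, hε, fun z hz hn =>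
      hisoS z (locmin_stat (hXPi i) (Qm i) (hQ i) (c i) (α i) hz) hn⟩
  -- D2 → B3 and B3 → D2
  have hD2B3 : D2 → B3 := by
    intro h i hi
    obtain ⟨ε, hε, hisoS⟩ :=
      stat_cop_isolated (hXPi i) (Qm i) (hQ i) (c i) ⟨hxbar, hi⟩ (h i hi).1 (h i hi).2
    refine ⟨strict_to_locmin (strong_to_strict (hD2B1 h i hi)), ε, hε, fun z hz hn => ?_⟩
    exact hisoS z (locmin_stat (hXPi i) (Qm i) (hQ i) (c i) (α i) hz) hn
  have hB3D2 : B3 → D2 := by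
    intro h i hi
    obtain ⟨hmin, hiso⟩ := h i hi
    exact ⟨locmin_stat (hXPi i) (Qm i) (hQ i) (c i) (α i) hmin,
      iso_to_cop (hXPi i) (Qm i) (hQ i) (c i) (α i) hmin hiso⟩
  -- restriction of local minimality of f to active pieces
  have hrestrict : ∀ z : Fin n → ℝ, IsLocMin' f X z → ∀ i, z ∈ P i →
      IsLocMin' (quadF (Qm i) (c i) (α i)) (X ∩ P i) z := by
    intro z hz i hzi
    obtain ⟨hzX, ε, hε, hm⟩ := hz
    refine ⟨⟨hzX, hzi⟩, ε, hε, fun w hw hn => ?_⟩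
    rw [← hfq i w hw.2, ← hfq i z hzi]
    exact hm w hw.1 hn
  -- a uniform isolation radius for stationary points of active pieces
  have hiso_choice : D2 → ∃ εm > (0:ℝ), εm ≤ δloc ∧ ∀ i, xbar ∈ P i →
      ∀ z, IsStatQ (Qm i) (c i) (X ∩ P i) z → n2 (z - xbar) < εm → z = xbar := by
    intro h
    have hchoice : ∀ i : Fin I, ∃ εi, (0:ℝ) < εi ∧ (xbar ∈ P i →
        ∀ z, IsStatQ (Qm i) (c i) (X ∩ P i) z → n2 (z - xbar) < εi → z = xbar) := by
      intro i
      by_cases hi : xbar ∈ P i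
      · obtain ⟨εi, hεi, hs⟩ := stat_cop_isolated (hXPi i) (Qm i) (hQ i) (c i)
          ⟨hxbar, hi⟩ (h i hi).1 (h i hi).2
        exact ⟨εi, hεi, fun _ => hs⟩
      · exact ⟨1, one_pos, fun hh => absurd hh hi⟩
    choose εf hεf hsf using hchoice
    refine ⟨min δloc (Finset.univ.inf' Finset.univ_nonempty εf), ?_, min_le_left _ _, ?_⟩
    · apply lt_min hδloc
      rw [Finset.lt_inf'_iff]
      exact fun i _ => hεf i
    · intro i hi z hz hn
      exact hsf i hi z hz (lt_of_lt_of_le hn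
        (le_trans (min_le_right _ _) (Finset.inf'_le _ (Finset.mem_univ i))))
  -- D2 → A3
  have hD2A3 : D2 → A3 := by
    intro h
    refine ⟨strict_to_locmin (strong_to_strict (hD2A1 h)), ?_⟩
    obtain ⟨εm, hεm, hεmδ, hsf⟩ := hiso_choice h
    refine ⟨εm, hεm, fun z hz hn => ?_⟩
    obtain ⟨i, hxi, hzi⟩ := hloc z (lt_of_lt_of_le hn hεmδ)
    exact hsf i hxi z
      (locmin_stat (hXPi i) (Qm i) (hQ i) (c i) (α i) (hrestrict z hz i hzi)) hn
  -- common tool: nearby same-value local minimizers of f from flat critical directions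
  have hflat : ∀ i, xbar ∈ P i → IsLocMin' f X xbar →
      ∀ v ∈ TangentCone (X ∩ P i) xbar, v ≠ 0 →
      (∑ k, gradQ (Qm i) (c i) xbar k * v k) = 0 →
      (∑ k, ∑ l, Qm i k l * v k * v l) = 0 →
      ∀ η > (0:ℝ), ∃ z, IsLocMin' f X z ∧ z ≠ xbar ∧ n2 (z - xbar) < η := by
    intro i hi hmin v hv hv0 hG hH η hη
    obtain ⟨hxS, ε0, hε0, hm⟩ := hmin
    set η' := min (ε0 / 2) η with hη'def
    have hη' : 0 < η' := lt_min (by linarith) hη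
    obtain ⟨z, hzS, hzne, hzn, hzval⟩ := crit_zero_point (hXPi i) (Qm i) (hQ i) (c i) (α i)
      ⟨hxbar, hi⟩ hv hv0 hG hH η' hη'
    have hfz : f z = f xbar := by
      rw [hfq i z hzS.2, hfq i xbar hi, hzval]
    refine ⟨z, ⟨hzS.1, ε0 / 2, by linarith, fun w hw hn => ?_⟩, hzne,
      lt_of_lt_of_le hzn (min_le_right _ _)⟩
    have htri : n2 (w - xbar) < ε0 := by
      have h1 : n2 (w - xbar) ≤ n2 (w - z) + n2 (z - xbar) := by
        have := n2_triangle (w - z) (z - xbar)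
        rw [sub_add_sub_cancel] at this
        exact this
      have h2 : n2 (z - xbar) < ε0 / 2 := lt_of_lt_of_le hzn (min_le_left _ _)
      linarith
    rw [hfz]
    exact hm w hw htri
  -- A3 → D2
  have hA3D2 : A3 → D2 := by
    intro h i hi
    obtain ⟨hmin, εiso, hεiso, hiso⟩ := h
    have hminI := hrestrict xbar hmin i hi
    refine ⟨locmin_stat (hXPi i) (Qm i) (hQ i) (c i) (α i) hminI, ?_⟩
    intro v hv hv0 hG
    rcases lt_or_eq_of_le
      (locmin_crit_nonneg (hXPi i) (Qm i) (hQ i) (c i) (α i) hminI hv hG) with hpos | heq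
    · exact hpos
    exfalso
    obtain ⟨z, hzmin, hzne, hzn⟩ := hflat i hi hmin v hv hv0 hG heq.symm εiso hεiso
    exact hzne (hiso z hzmin hzn)
  -- A4 → D2
  have hA4D2 : A4 → D2 := by
    intro h i hi
    obtain ⟨⟨hstatx, εiso, hεiso, hiso⟩, hmin⟩ := h
    have hminI := hrestrict xbar hmin i hi
    refine ⟨locmin_stat (hXPi i) (Qm i) (hQ i) (c i) (α i) hminI, ?_⟩
    intro v hv hv0 hG
    rcases lt_or_eq_of_le
      (locmin_crit_nonneg (hXPi i) (Qm i) (hQ i) (c i) (α i) hminI hv hG) with hpos | heq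
    · exact hpos
    exfalso
    obtain ⟨z, hzmin, hzne, hzn⟩ := hflat i hi hmin v hv hv0 hG heq.symm εiso hεiso
    exact hzne (hiso z (f_locmin_stat f P hP hcover Qm hQ c α hfq hX hzmin) hzn)
  -- D2 → A4
  have hD2A4 : D2 → A4 := by
    intro h
    have hmin := strict_to_locmin (strong_to_strict (hD2A1 h))
    refine ⟨⟨f_locmin_stat f P hP hcover Qm hQ c α hfq hX hmin, ?_⟩, hmin⟩
    obtain ⟨εm, hεm, hεmδ, hsf⟩ := hiso_choice h
    refine ⟨εm, hεm, fun z hz hn => ?_⟩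
    obtain ⟨i, hxi, hzi⟩ := hloc z (lt_of_lt_of_le hn hεmδ)
    -- z is a stationary point of the quadratic piece i on X ∩ P i
    have hstatz : IsStatQ (Qm i) (c i) (X ∩ P i) z := by
      refine ⟨⟨hz.1, hzi⟩, fun x hx => ?_⟩
      have hDD := seg_dirDeriv f (hXPi i) (Qm i) (hQ i) (c i) (α i)
        (fun w hw => hfq i w hw.2) ⟨hz.1, hzi⟩ hx
      obtain ⟨d, hd, hd0⟩ := hz.2 x hx.1
      have heq := dirDeriv_unique hDD.1 hd
      have hconv : (∑ k, gradQ (Qm i) (c i) z k * (x k - z k))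
          = ∑ k, gradQ (Qm i) (c i) z k * (x - z) k := by
        apply Finset.sum_congr rfl; intro k _; rfl
      rw [hconv, heq]
      exact hd0
    exact hsf i hxi z hstatz hn
  -- stationarity of the pieces from stationarity of f (part 1 of C and D1)
  have hstatIfromC : (∀ x ∈ X, ∃ d, HasDirDeriv f xbar (x - xbar) d ∧ 0 ≤ d) →
      ∀ i, xbar ∈ P i → IsStatQ (Qm i) (c i) (X ∩ P i) xbar := by
    intro h1 i hi
    refine ⟨⟨hxbar, hi⟩, fun x hx => ?_⟩
    have hDD := seg_dirDeriv f (hXPi i) (Qm i) (hQ i) (c i) (α i)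
      (fun w hw => hfq i w hw.2) ⟨hxbar, hi⟩ hx
    obtain ⟨d, hd, hd0⟩ := h1 x hx.1
    have heq := dirDeriv_unique hDD.1 hd
    have hconv : (∑ k, gradQ (Qm i) (c i) xbar k * (x k - xbar k))
        = ∑ k, gradQ (Qm i) (c i) xbar k * (x - xbar) k := by
      apply Finset.sum_congr rfl; intro k _; rfl
    rw [hconv, heq]
    exact hd0
  -- D2 → C
  have hD2C : D2 → C := by
    intro h
    have hmin := strict_to_locmin (strong_to_strict (hD2A1 h))
    have hstatx := f_locmin_stat f P hP hcover Qm hQ c α hfq hX hmin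
    refine ⟨hstatx.2, ?_⟩
    intro x hx hne d₁ hd₁ hd₁0
    obtain ⟨j, hxPj, ⟨δ, hδ, hseg⟩, hDD⟩ :=
      f_radial_deriv f P hP hcover Qm hQ c α hfq xbar (x - xbar)
    have hGd : (∑ k, gradQ (Qm j) (c j) xbar k * (x - xbar) k) = d₁ :=
      dirDeriv_unique hDD.1 hd₁
    have hvT : x - xbar ∈ TangentCone (X ∩ P j) xbar := by
      apply feasDir_subset_tangent
      refine ⟨min δ 1, lt_min hδ one_pos, fun τ hτ => ⟨?_, ?_⟩⟩
      · exact poly_convex hX hxbar hx (le_of_lt hτ.1) (le_trans hτ.2 (min_le_right _ _))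
      · exact hseg τ ⟨le_of_lt hτ.1, le_trans hτ.2 (min_le_left _ _)⟩
    have hv0 : x - xbar ≠ 0 := sub_ne_zero.2 hne
    have hpos := (h j hxPj).2 (x - xbar) hvT hv0 (by rw [hGd, hd₁0])
    refine ⟨_, ?_, hpos⟩
    rw [← hd₁0, ← hGd] at *
    exact hDD
  -- C → D2
  have hCD2 : C → D2 := by
    intro h i hi
    refine ⟨hstatIfromC h.1 i hi, ?_⟩
    intro v hv hv0 hG
    have hmem := (poly_tangent_facts (hXPi i) ⟨hxbar, hi⟩).1 ▸ hv
    obtain ⟨δ, hδ, hfeas⟩ := hmem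
    set x := xbar + δ • v with hxdef
    have hxmem : x ∈ X ∩ P i := hfeas δ ⟨hδ, le_refl δ⟩
    have hxne : x ≠ xbar := by
      intro hh
      have hsm : δ • v = 0 := by
        have := congrArg (fun w => w - xbar) hh
        simpa [hxdef, add_sub_cancel_left] using this
      rcases smul_eq_zero.1 hsm with h' | h'
      · exact (ne_of_gt hδ) h'
      · exact hv0 h'
    have hDD : HasDirDeriv2 f xbar (δ • v) (∑ k, gradQ (Qm i) (c i) xbar k * (δ • v) k)
        (∑ k, ∑ l, Qm i k l * (δ • v) k * (δ • v) l) := by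
      apply hasDirDeriv2_of_segment f (Qm i) (hQ i) (c i) (α i) xbar (δ • v) one_pos
      intro τ hτ
      rcases eq_or_lt_of_le hτ.1 with h0 | h0
      · rw [← h0]
        simp only [zero_smul, add_zero]
        exact hfq i xbar hi
      · have hsm : xbar + τ • δ • v = xbar + (τ * δ) • v := by rw [smul_smul]
        rw [hsm]
        exact hfq i _ (hfeas (τ * δ) ⟨by positivity, by nlinarith [hτ.2]⟩).2
    have hG' : (∑ k, gradQ (Qm i) (c i) xbar k * (δ • v) k) = 0 := by
      rw [lin_smul, hG, mul_zero]
    have hH' : (∑ k, ∑ l, Qm i k l * (δ • v) k * (δ • v) l)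
        = δ ^ 2 * ∑ k, ∑ l, Qm i k l * v k * v l := HQ_smul _ _ _
    rw [hG', hH'] at hDD
    have hx_sub : x - xbar = δ • v := by rw [hxdef, add_sub_cancel_left]
    rw [← hx_sub] at hDD
    obtain ⟨d₂, hdd₂, hd₂pos⟩ := h.2 x hxmem.1 hxne 0 hDD.1 rfl
    have hd₂eq := dirDeriv2_unique hdd₂ hDD
    nlinarith [pow_pos hδ 2, hd₂pos, hd₂eq]
  -- D2 → D1
  have hD2D1 : D2 → D1 := by
    intro h
    refine ⟨(hD2C h).1, ?_⟩
    intro v hv hv0 d₁ hd₁ hd₁0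
    have hmemX := (poly_tangent_facts hX hxbar).1 ▸ hv
    obtain ⟨δX, hδX, hfeasX⟩ := hmemX
    obtain ⟨j, hxPj, ⟨δj, hδj, hseg⟩, hDD⟩ :=
      f_radial_deriv f P hP hcover Qm hQ c α hfq xbar v
    have hGd : (∑ k, gradQ (Qm j) (c j) xbar k * v k) = d₁ := dirDeriv_unique hDD.1 hd₁
    have hvT : v ∈ TangentCone (X ∩ P j) xbar := by
      apply feasDir_subset_tangent
      refine ⟨min δX δj, lt_min hδX hδj, fun τ hτ => ⟨?_, ?_⟩⟩
      · exact hfeasX τ ⟨hτ.1, le_trans hτ.2 (min_le_left _ _)⟩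
      · exact hseg τ ⟨le_of_lt hτ.1, le_trans hτ.2 (min_le_right _ _)⟩
    have hpos := (h j hxPj).2 v hvT hv0 (by rw [hGd, hd₁0])
    refine ⟨_, ?_, hpos⟩
    rw [← hGd]
    exact hDD
  -- D1 → D2
  have hD1D2 : D1 → D2 := by
    intro h i hi
    refine ⟨hstatIfromC h.1 i hi, ?_⟩
    intro v hv hv0 hG
    have hvX : v ∈ TangentCone X xbar := tangent_mono Set.inter_subset_left xbar hv
    have hmem := (poly_tangent_facts (hXPi i) ⟨hxbar, hi⟩).1 ▸ hv
    obtain ⟨δ, hδ, hfeas⟩ := hmem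
    have hDD : HasDirDeriv2 f xbar v (∑ k, gradQ (Qm i) (c i) xbar k * v k)
        (∑ k, ∑ l, Qm i k l * v k * v l) := by
      apply hasDirDeriv2_of_segment f (Qm i) (hQ i) (c i) (α i) xbar v hδ
      intro τ hτ
      rcases eq_or_lt_of_le hτ.1 with h0 | h0
      · rw [← h0]
        simp only [zero_smul, add_zero]
        exact hfq i xbar hi
      · exact hfq i _ (hfeas τ ⟨h0, hτ.2⟩).2
    rw [hG] at hDD
    obtain ⟨d₂, hdd₂, hd₂pos⟩ := h.2 v hvX hv0 0 hDD.1 rfl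
    have hd₂eq := dirDeriv2_unique hdd₂ hDD
    rw [← hd₂eq]
    exact hd₂pos
  -- assemble
  exact ⟨⟨hA1A2, fun h => hD2A1 (hA2D2 h)⟩,
    ⟨fun h => hD2A3 (hA2D2 h), fun h => hD2A2 (hA3D2 h)⟩,
    ⟨fun h => hD2A4 (hA3D2 h), fun h => hD2A3 (hA4D2 h)⟩,
    ⟨fun h => hD2B1 (hA4D2 h), fun h => hD2A4 (hB1D2 h)⟩,
    ⟨hB1B2, fun h => hD2B1 (hB2D2 h)⟩,
    ⟨fun h => hD2B3 (hB2D2 h), fun h => hD2B2 (hB3D2 h)⟩,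
    ⟨fun h => hD2B4 (hB3D2 h), fun h => hD2B3 (hB4D2 h)⟩,
    ⟨fun h => hD2C (hB4D2 h), fun h => hD2B4 (hCD2 h)⟩,
    ⟨fun h => hD2D1 (hCD2 h), fun h => hD2C (hD1D2 h)⟩,
    ⟨hD1D2, hD2D1⟩⟩
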